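/- arXiv:1902.08015 — 2 statements merged into one kernel-verified Lean document; each statement's English description precedes it below -/
import Mathlib

section
/- (Theorem 2.2) For integers n, k ≥ 0 with n - k ≡ 0 (mod 2), λ ∈ ℝ, and x ∈ ℝ, one has ∑_{m=0}^{n} ( (x^n/k!) ∑_{l=0}^{k} C(k,l) (-1)^{k-l} (l - k/2)^m ) λ^{n-m} S₁(n,m) = T_{n,k}(x, x², …, x^{n-k+1}|λ) if n ≥ k, and this sum equals 0 if n < k. -/
open PowerSeries Finset Nat

/-- The degenerate falling factorial `(x)_{n,λ} = x(x-λ)⋯(x-(n-1)λ)`. -/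
noncomputable def dFall (l x : ℝ) (n : ℕ) : ℝ := ∏ i ∈ Finset.range n, (x - i * l)

/-- The degenerate rising factorial `⟨x⟩_{n,λ} = x(x+λ)⋯(x+(n-1)λ)`. -/
noncomputable def dRise (l x : ℝ) (n : ℕ) : ℝ := ∏ i ∈ Finset.range n, (x + i * l)

/-- The degenerate exponential formal power series `e_λ^x(t) = ∑_{n≥0} (x)_{n,λ} tⁿ/n!`. -/
noncomputable def degExp (l x : ℝ) : PowerSeries ℝ :=
  PowerSeries.mk fun n => dFall l x n / (n ! : ℝ)

/-- Exponential of a formal power series `G` (with zero constant term):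
`coeff n (exp G) = ∑_{k=0}^{n} (1/k!) coeff n (G^k)`. -/
noncomputable def expComp (G : PowerSeries ℝ) : PowerSeries ℝ :=
  PowerSeries.mk fun n =>
    ∑ k ∈ Finset.range (n + 1), (k ! : ℝ)⁻¹ * PowerSeries.coeff n (G ^ k)

/-- The series `∑_{m≥1} x_m (1)_{m,λ} t^m/m!`. -/
noncomputable def degBellSeries (l : ℝ) (x : ℕ → ℝ) : PowerSeries ℝ :=
  PowerSeries.mk fun m => if m = 0 then 0 else x m * dFall l 1 m / (m ! : ℝ)

/-- The degenerate incomplete Bell polynomial `B_{n,k}(x₁,…,x_{n-k+1}|λ)`, defined by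
`(1/k!)(∑_{m≥1} x_m (1)_{m,λ} t^m/m!)^k = ∑_{n≥k} B_{n,k}(x₁,…|λ) tⁿ/n!`. -/
noncomputable def degIncBell (l : ℝ) (x : ℕ → ℝ) (n k : ℕ) : ℝ :=
  (n ! : ℝ) * PowerSeries.coeff n ((k ! : ℝ)⁻¹ • (degBellSeries l x) ^ k)

/-- The degenerate complete Bell polynomial `B_n(x₁,…,x_n|λ)`, defined by
`exp(∑_{i≥1} x_i (1)_{i,λ} t^i/i!) = ∑_{n≥0} B_n(x₁,…,x_n|λ) tⁿ/n!`. -/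
noncomputable def degCompBell (l : ℝ) (x : ℕ → ℝ) (n : ℕ) : ℝ :=
  (n ! : ℝ) * PowerSeries.coeff n (expComp (degBellSeries l x))

/-- The degenerate Stirling numbers of the second kind `S_{2,λ}(n,k)`, defined by
`(1/k!)(e_λ(t)-1)^k = ∑_{n≥k} S_{2,λ}(n,k) tⁿ/n!`. -/
noncomputable def degStirling2 (l : ℝ) (n k : ℕ) : ℝ :=
  (n ! : ℝ) * PowerSeries.coeff n ((k ! : ℝ)⁻¹ • (degExp l 1 - 1) ^ k)

/-- The degenerate Bell polynomials `B_{n,λ}(x)`, defined by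
`exp(x(e_λ(t)-1)) = ∑_{n≥0} B_{n,λ}(x) tⁿ/n!`. -/
noncomputable def degBell (l x : ℝ) (n : ℕ) : ℝ :=
  (n ! : ℝ) * PowerSeries.coeff n (expComp (x • (degExp l 1 - 1)))

/-- The formal power series `log(1+t) = ∑_{n≥1} (-1)^{n+1} tⁿ/n`. -/
noncomputable def logOnePlus : PowerSeries ℝ :=
  PowerSeries.mk fun n => if n = 0 then 0 else (-1) ^ (n + 1) / (n : ℝ)

/-- The (signed) Stirling numbers of the first kind `S₁(n,k)`, defined by
`(1/k!)(log(1+t))^k = ∑_{n≥k} S₁(n,k) tⁿ/n!`. -/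
noncomputable def stirling1 (n k : ℕ) : ℝ :=
  (n ! : ℝ) * PowerSeries.coeff n ((k ! : ℝ)⁻¹ • logOnePlus ^ k)

/-- The series `∑_{m≥1} x_m ((1/2)_{m,λ} - (-1)^m ⟨1/2⟩_{m,λ}) t^m/m!`. -/
noncomputable def centralSeq (l : ℝ) (x : ℕ → ℝ) : PowerSeries ℝ :=
  PowerSeries.mk fun m => if m = 0 then 0 else
    x m * (dFall l (1 / 2) m - (-1) ^ m * dRise l (1 / 2) m) / (m ! : ℝ)

/-- The degenerate central incomplete Bell polynomial `T_{n,k}(x₁,…,x_{n-k+1}|λ)`. -/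
noncomputable def degCentIncBell (l : ℝ) (x : ℕ → ℝ) (n k : ℕ) : ℝ :=
  (n ! : ℝ) * PowerSeries.coeff n ((k ! : ℝ)⁻¹ • (centralSeq l x) ^ k)

/-- The degenerate central factorial numbers of the second kind `T_{2,λ}(n,k)`, defined by
`(1/k!)(e_λ^{1/2}(t) - e_λ^{-1/2}(t))^k = ∑_{n≥k} T_{2,λ}(n,k) tⁿ/n!`. -/
noncomputable def degCentFact2 (l : ℝ) (n k : ℕ) : ℝ :=
  (n ! : ℝ) * PowerSeries.coeff n
    ((k ! : ℝ)⁻¹ • (degExp l (1 / 2) - degExp l (-(1 / 2))) ^ k)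

/-- The degenerate central Bell polynomial `B^{(c)}_{n,λ}(x)`, defined by
`exp(x(e_λ^{1/2}(t)-e_λ^{-1/2}(t))) = ∑_{n≥0} B^{(c)}_{n,λ}(x) tⁿ/n!`. -/
noncomputable def degCentBellPoly (l x : ℝ) (n : ℕ) : ℝ :=
  (n ! : ℝ) * PowerSeries.coeff n
    (expComp (x • (degExp l (1 / 2) - degExp l (-(1 / 2)))))

/-- The degenerate central complete Bell polynomial `B_n^{(c)}(x₁,…,x_n|λ)`. -/
noncomputable def degCentCompBell (l : ℝ) (x : ℕ → ℝ) (n : ℕ) : ℝ :=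
  (n ! : ℝ) * PowerSeries.coeff n (expComp (centralSeq l x))

/-- The ordinary incomplete Bell polynomials `B_{n,k}(x₁,…,x_{n-k+1})`, defined by
`(1/k!)(∑_{m≥1} x_m t^m/m!)^k = ∑_{n≥k} B_{n,k}(x₁,…) tⁿ/n!`. -/
noncomputable def incBell (x : ℕ → ℝ) (n k : ℕ) : ℝ :=
  (n ! : ℝ) * PowerSeries.coeff n
    ((k ! : ℝ)⁻¹ • (PowerSeries.mk fun m => if m = 0 then 0 else x m / (m ! : ℝ)) ^ k)

/-- The set of tuples `(i₁,…,i_{n-k+1})` of nonnegative integers with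
`i₁+⋯+i_{n-k+1} = k` and `i₁+2i₂+⋯+(n-k+1)i_{n-k+1} = n`
(each such `i_j` is at most `n`, so no solution is cut off). -/
noncomputable def partIdx (n k : ℕ) : Finset (Fin (n - k + 1) → ℕ) :=
  (Fintype.piFinset fun _ => Finset.range (n + 1)).filter
    fun i => (∑ j, i j) = k ∧ (∑ j, (j.1 + 1) * i j) = n

/-- The set of tuples `(m₁,…,m_n)` of nonnegative integers with `m₁+2m₂+⋯+nm_n = n`. -/
noncomputable def partIdx' (n : ℕ) : Finset (Fin n → ℕ) :=
  (Fintype.piFinset fun _ => Finset.range (n + 1)).filter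
    fun m => (∑ j, (j.1 + 1) * m j) = n


/-! ### Auxiliary lemmas -/

lemma dFall_succ (l x : ℝ) (n : ℕ) : dFall l x (n + 1) = dFall l x n * (x - n * l) :=
  Finset.prod_range_succ _ _

lemma dFall_zero' (l x : ℝ) : dFall l x 0 = 1 := Finset.prod_range_zero _

lemma coeff_pow_eq_zero {f : PowerSeries ℝ} (hf : constantCoeff f = 0) :
    ∀ {k n : ℕ}, n < k → PowerSeries.coeff n (f ^ k) = 0 := by
  intro k
  induction k with
  | zero => intro n h; omega
  | succ k ih =>
    intro n h
    rw [pow_succ, PowerSeries.coeff_mul]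
    apply Finset.sum_eq_zero
    rintro ⟨i, j⟩ hij
    rw [Finset.HasAntidiagonal.mem_antidiagonal] at hij
    rcases Nat.eq_zero_or_pos j with hj | hj
    · subst hj
      rw [PowerSeries.coeff_zero_eq_constantCoeff, hf, mul_zero]
    · have : i < k := by omega
      rw [ih this, zero_mul]

lemma derivative_logOnePlus : (1 + X) * (d⁄dX ℝ logOnePlus) = 1 := by
  ext n
  rw [add_mul, one_mul, map_add]
  rcases Nat.eq_zero_or_pos n with hn | hn
  · subst hn
    simp [PowerSeries.coeff_derivative, logOnePlus]
  · obtain ⟨m, rfl⟩ := Nat.exists_eq_add_of_le hn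
    rw [PowerSeries.coeff_one, if_neg (by omega)]
    rw [show 1 + m = m + 1 by omega, PowerSeries.coeff_succ_X_mul,
      PowerSeries.coeff_derivative, PowerSeries.coeff_derivative]
    simp only [logOnePlus, PowerSeries.coeff_mk, if_neg (Nat.succ_ne_zero _),
      if_neg (Nat.succ_ne_zero _)]
    have h1 : ((m : ℝ) + 1) ≠ 0 := by positivity
    have h2 : ((m + 1 : ℕ) : ℝ) + 1 ≠ 0 := by positivity
    push_cast
    field_simp
    ring

lemma logpow_rec (n m : ℕ) :
    ((n : ℝ) + 1) * PowerSeries.coeff (n + 1) (logOnePlus ^ (m + 1)) +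
      (n : ℝ) * PowerSeries.coeff n (logOnePlus ^ (m + 1)) =
    ((m : ℝ) + 1) * PowerSeries.coeff n (logOnePlus ^ m) := by
  have hD : (1 + X) * (d⁄dX ℝ (logOnePlus ^ (m + 1)))
      = ((m : ℕ) + 1) • (logOnePlus ^ m) := by
    rw [Derivation.leibniz_pow]
    simp only [Nat.add_sub_cancel, smul_eq_mul, nsmul_eq_mul]
    calc (1 + X) * ((↑(m + 1) : PowerSeries ℝ) * (logOnePlus ^ m * d⁄dX ℝ logOnePlus))
        = (↑(m + 1) : PowerSeries ℝ) * (logOnePlus ^ m * ((1 + X) * d⁄dX ℝ logOnePlus)) := by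
          ring
      _ = _ := by rw [derivative_logOnePlus, mul_one]
  have h := congrArg (PowerSeries.coeff n) hD
  rw [add_mul, one_mul, map_add, map_nsmul, nsmul_eq_mul,
    PowerSeries.coeff_derivative] at h
  rcases n with _ | n'
  · rw [PowerSeries.coeff_zero_X_mul] at h
    push_cast at h ⊢
    rw [zero_mul, add_zero, zero_add] at *
    linarith [h]
  · rw [PowerSeries.coeff_succ_X_mul, PowerSeries.coeff_derivative] at h
    push_cast at h ⊢
    linarith [h]

lemma stirling1_eq (n k : ℕ) :
    stirling1 n k = (n ! : ℝ) * ((k ! : ℝ)⁻¹ * PowerSeries.coeff n (logOnePlus ^ k)) := by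
  rw [stirling1, map_smul, smul_eq_mul]

lemma constantCoeff_logOnePlus : constantCoeff logOnePlus = 0 := by
  rw [← PowerSeries.coeff_zero_eq_constantCoeff_apply, logOnePlus, PowerSeries.coeff_mk, if_pos rfl]

lemma stirling1_eq_zero_of_lt {n k : ℕ} (h : n < k) : stirling1 n k = 0 := by
  rw [stirling1_eq, coeff_pow_eq_zero constantCoeff_logOnePlus h, mul_zero, mul_zero]

lemma stirling1_zero_zero : stirling1 0 0 = 1 := by
  rw [stirling1_eq]
  simp

lemma stirling1_succ_zero (n : ℕ) : stirling1 (n + 1) 0 = 0 := by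
  rw [stirling1_eq]
  simp [PowerSeries.coeff_one]

lemma stirling1_rec (n m : ℕ) :
    stirling1 (n + 1) (m + 1) = stirling1 n m - n * stirling1 n (m + 1) := by
  have h := logpow_rec n m
  rw [stirling1_eq, stirling1_eq, stirling1_eq]
  have hm1 : ((m + 1)! : ℝ) ≠ 0 := Nat.cast_ne_zero.2 (Nat.factorial_ne_zero _)
  have hm : (m ! : ℝ) ≠ 0 := Nat.cast_ne_zero.2 (Nat.factorial_ne_zero _)
  have hfm : ((m + 1)! : ℝ) = ((m : ℝ) + 1) * m ! := by
    rw [Nat.factorial_succ]; push_cast; ring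
  have hfn : ((n + 1)! : ℝ) = ((n : ℝ) + 1) * n ! := by
    rw [Nat.factorial_succ]; push_cast; ring
  rw [hfm, hfn]
  field_simp
  linear_combination h

lemma star (l a : ℝ) : ∀ n : ℕ,
    ∑ m ∈ Finset.range (n + 1), a ^ m * l ^ (n - m) * stirling1 n m = dFall l a n := by
  intro n
  induction n with
  | zero => simp [dFall, stirling1_zero_zero]
  | succ n ih =>
    rw [Finset.sum_range_succ']
    have hf0 : a ^ 0 * l ^ (n + 1 - 0) * stirling1 (n + 1) 0 = 0 := by
      rw [stirling1_succ_zero]; ring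
    rw [hf0, add_zero]
    have hstep : ∀ m ∈ Finset.range (n + 1),
        a ^ (m + 1) * l ^ (n + 1 - (m + 1)) * stirling1 (n + 1) (m + 1)
          = a * (a ^ m * l ^ (n - m) * stirling1 n m)
            - (n : ℝ) * (a ^ (m + 1) * l ^ (n - m) * stirling1 n (m + 1)) := by
      intro m hm
      rw [Nat.succ_sub_succ, stirling1_rec]
      ring
    rw [Finset.sum_congr rfl hstep, Finset.sum_sub_distrib, ← Finset.mul_sum, ← Finset.mul_sum]
    have hT : (∑ m ∈ Finset.range (n + 1), a ^ (m + 1) * l ^ (n - m) * stirling1 n (m + 1))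
        = l * dFall l a n - l ^ (n + 1) * stirling1 n 0 := by
      have hs : ∑ m ∈ Finset.range (n + 2), a ^ m * l ^ (n + 1 - m) * stirling1 n m
          = (∑ m ∈ Finset.range (n + 1), a ^ (m + 1) * l ^ (n + 1 - (m + 1)) * stirling1 n (m + 1))
            + a ^ 0 * l ^ (n + 1 - 0) * stirling1 n 0 := Finset.sum_range_succ' _ _
      have hs2 : ∑ m ∈ Finset.range (n + 2), a ^ m * l ^ (n + 1 - m) * stirling1 n m
          = l * dFall l a n := by
        rw [Finset.sum_range_succ, stirling1_eq_zero_of_lt (by omega), mul_zero, add_zero]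
        rw [← ih, Finset.mul_sum]
        refine Finset.sum_congr rfl fun m hm => ?_
        rw [Finset.mem_range] at hm
        have : n + 1 - m = (n - m) + 1 := by omega
        rw [this, pow_succ]
        ring
      have hss : ∀ m ∈ Finset.range (n+1),
          a ^ (m + 1) * l ^ (n + 1 - (m + 1)) * stirling1 n (m + 1)
            = a ^ (m + 1) * l ^ (n - m) * stirling1 n (m + 1) := by
        intro m hm
        rw [Nat.succ_sub_succ]
      rw [hs2, Finset.sum_congr rfl hss] at hs
      rw [eq_sub_iff_add_eq, hs]
      norm_num
    rw [hT]
    have hns : (n : ℝ) * stirling1 n 0 = 0 := by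
      cases n with
      | zero => simp
      | succ n => rw [stirling1_succ_zero, mul_zero]
    have : dFall l a (n + 1) = dFall l a n * (a - n * l) := by
      rw [dFall, dFall, Finset.prod_range_succ]
    rw [this, ih]
    linear_combination l ^ (n + 1) * hns

lemma dFall_add (l a b : ℝ) : ∀ n : ℕ,
    ∑ i ∈ Finset.range (n + 1), (n.choose i : ℝ) * dFall l a i * dFall l b (n - i)
      = dFall l (a + b) n := by
  intro n
  induction n with
  | zero => simp [dFall]
  | succ n ih =>
    rw [Finset.sum_range_succ']
    have h1 : ∀ i ∈ Finset.range (n + 1),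
        ((n + 1).choose (i + 1) : ℝ) * dFall l a (i + 1) * dFall l b (n + 1 - (i + 1))
        = (n.choose i : ℝ) * dFall l a i * dFall l b (n - i) * (a - i * l)
          + (n.choose (i + 1) : ℝ) * dFall l a (i + 1) * dFall l b (n - i) := by
      intro i hi
      rw [Nat.succ_sub_succ, Nat.choose_succ_succ]
      push_cast
      rw [dFall_succ]
      ring
    rw [Finset.sum_congr rfl h1, Finset.sum_add_distrib]
    have h2 : (∑ i ∈ Finset.range (n + 1),
          (n.choose (i + 1) : ℝ) * dFall l a (i + 1) * dFall l b (n - i))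
        + ((n + 1).choose 0 : ℝ) * dFall l a 0 * dFall l b (n + 1 - 0)
        = ∑ j ∈ Finset.range (n + 1),
            (n.choose j : ℝ) * dFall l a j * dFall l b (n - j) * (b - (n - j : ℕ) * l) := by
      have e1 : (∑ i ∈ Finset.range (n + 1),
            (n.choose (i + 1) : ℝ) * dFall l a (i + 1) * dFall l b (n + 1 - (i + 1)))
          + (n.choose 0 : ℝ) * dFall l a 0 * dFall l b (n + 1 - 0)
          = ∑ j ∈ Finset.range (n + 1 + 1), (n.choose j : ℝ) * dFall l a j * dFall l b (n + 1 - j) :=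
        (Finset.sum_range_succ' (fun j => (n.choose j : ℝ) * dFall l a j * dFall l b (n + 1 - j)) (n + 1)).symm
      have e2 : ∀ i ∈ Finset.range (n + 1), dFall l b (n + 1 - (i + 1)) = dFall l b (n - i) := by
        intro i hi; rw [Nat.succ_sub_succ]
      rw [Finset.sum_congr rfl fun i hi => by rw [e2 i hi]] at e1
      rw [Nat.choose_zero_right] at e1 ⊢
      rw [e1, Finset.sum_range_succ, Nat.choose_succ_self, Nat.cast_zero, zero_mul, zero_mul,
        add_zero]
      refine Finset.sum_congr rfl fun j hj => ?_
      rw [Finset.mem_range] at hj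
      have : n + 1 - j = (n - j) + 1 := by omega
      rw [this, dFall_succ]
      ring
    rw [add_assoc, h2, ← Finset.sum_add_distrib]
    have h3 : ∀ i ∈ Finset.range (n + 1),
        (n.choose i : ℝ) * dFall l a i * dFall l b (n - i) * (a - i * l)
          + (n.choose i : ℝ) * dFall l a i * dFall l b (n - i) * (b - (n - i : ℕ) * l)
        = ((n.choose i : ℝ) * dFall l a i * dFall l b (n - i)) * ((a + b) - n * l) := by
      intro i hi
      rw [Finset.mem_range] at hi
      have : ((n - i : ℕ) : ℝ) = (n : ℝ) - i := by
        rw [Nat.cast_sub (by omega)]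
      rw [this]
      ring
    rw [Finset.sum_congr rfl h3, ← Finset.sum_mul, ih, ← dFall_succ]

lemma degExp_mul (l a b : ℝ) : degExp l a * degExp l b = degExp l (a + b) := by
  ext n
  rw [PowerSeries.coeff_mul, Nat.sum_antidiagonal_eq_sum_range_succ_mk]
  simp only [degExp, PowerSeries.coeff_mk]
  rw [← dFall_add l a b n, Finset.sum_div]
  refine Finset.sum_congr rfl fun i hi => ?_
  rw [Finset.mem_range] at hi
  have hin : i ≤ n := by omega
  have hfact : (n.choose i : ℝ) * (i ! : ℝ) * ((n - i)! : ℝ) = (n ! : ℝ) := by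
    rw [← Nat.cast_mul, ← Nat.cast_mul, Nat.choose_mul_factorial_mul_factorial hin]
  have h1 : (i ! : ℝ) ≠ 0 := Nat.cast_ne_zero.2 (Nat.factorial_ne_zero _)
  have h2 : ((n - i)! : ℝ) ≠ 0 := Nat.cast_ne_zero.2 (Nat.factorial_ne_zero _)
  have h3 : (n ! : ℝ) ≠ 0 := Nat.cast_ne_zero.2 (Nat.factorial_ne_zero _)
  field_simp
  linear_combination (-(dFall l a i * dFall l b (n - i))) * hfact

lemma degExp_zero (l : ℝ) : degExp l 0 = 1 := by
  ext n
  cases n with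
  | zero => simp [degExp, dFall_zero']
  | succ n =>
    rw [degExp, PowerSeries.coeff_mk, PowerSeries.coeff_one, if_neg (Nat.succ_ne_zero _)]
    have : dFall l 0 (n + 1) = 0 := by
      apply Finset.prod_eq_zero (Finset.mem_range.2 (Nat.succ_pos n))
      simp
    rw [this, zero_div]

lemma epow (e : ℝ → PowerSeries ℝ) (h0 : e 0 = 1) (hmul : ∀ a b, e a * e b = e (a + b)) :
    ∀ (m : ℕ) (a : ℝ), e a ^ m = e (m * a) := by
  intro m
  induction m with
  | zero => intro a; rw [pow_zero, Nat.cast_zero, zero_mul, h0]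
  | succ m ih =>
    intro a
    rw [pow_succ, ih, hmul]
    norm_num
    ring

lemma coeff_sub_pow (e : ℝ → PowerSeries ℝ) (h0 : e 0 = 1)
    (hmul : ∀ a b, e a * e b = e (a + b)) (k n : ℕ) :
    PowerSeries.coeff n ((e (1 / 2) - e (-(1 / 2))) ^ k)
      = ∑ j ∈ Finset.range (k + 1), (k.choose j : ℝ) * (-1) ^ (k - j) *
          PowerSeries.coeff n (e ((j : ℝ) - (k : ℝ) / 2)) := by
  rw [sub_pow, map_sum]
  refine Finset.sum_congr rfl fun j hj => ?_
  rw [Finset.mem_range] at hj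
  have hjk : j ≤ k := by omega
  rw [epow e h0 hmul, epow e h0 hmul, mul_assoc ((-1 : PowerSeries ℝ) ^ (j + k)), hmul]
  have harg : (j : ℝ) * (1 / 2) + ((k - j : ℕ) : ℝ) * (-(1 / 2)) = (j : ℝ) - (k : ℝ) / 2 := by
    rw [Nat.cast_sub hjk]
    ring
  rw [harg]
  have hC : ((-1 : PowerSeries ℝ)) ^ (j + k) * e ((j : ℝ) - (k : ℝ) / 2) * ((k.choose j : ℕ) : PowerSeries ℝ)
      = PowerSeries.C ((-1 : ℝ) ^ (j + k) * (k.choose j : ℝ)) * e ((j : ℝ) - (k : ℝ) / 2) := by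
    rw [map_mul, map_pow, map_neg, map_one, map_natCast]
    ring
  rw [hC, PowerSeries.coeff_C_mul]
  have hsign : (-1 : ℝ) ^ (j + k) = (-1 : ℝ) ^ (k - j) := by
    rw [show j + k = (k - j) + 2 * j by omega, pow_add, pow_mul]
    norm_num
  rw [hsign]
  ring

lemma dFall_neg_half (l : ℝ) (m : ℕ) :
    dFall l (-(1 / 2)) m = (-1) ^ m * dRise l (1 / 2) m := by
  rw [dFall, dRise]
  have h : ∀ i ∈ Finset.range m, (-(1 / 2 : ℝ) - i * l) = (-1) * ((1 / 2 : ℝ) + i * l) :=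
    fun i _ => by ring
  rw [Finset.prod_congr rfl h, Finset.prod_mul_distrib, Finset.prod_const, Finset.card_range]

lemma centralSeq_eq (l x : ℝ) :
    centralSeq l (fun m => x ^ m) = rescale x (degExp l (1 / 2) - degExp l (-(1 / 2))) := by
  ext m
  rw [coeff_rescale, centralSeq, PowerSeries.coeff_mk, map_sub]
  simp only [degExp, PowerSeries.coeff_mk]
  cases m with
  | zero => simp [dFall_zero']
  | succ m =>
    rw [if_neg (Nat.succ_ne_zero _), dFall_neg_half]
    ring

/-- Theorem 2.2. -/
theorem sum_stirling1_eq_degCentIncBell (l x : ℝ) (n k : ℕ) (hpar : Even ((n : ℤ) - k)) :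
    (∑ m ∈ Finset.range (n + 1),
        (x ^ n / (k ! : ℝ) * ∑ j ∈ Finset.range (k + 1),
            (k.choose j : ℝ) * (-1) ^ (k - j) * ((j : ℝ) - (k : ℝ) / 2) ^ m) *
          l ^ (n - m) * stirling1 n m) =
      if k ≤ n then degCentIncBell l (fun m => x ^ m) n k else 0 := by
  have hGmul := degExp_mul l
  have hG0 : constantCoeff (degExp l (1 / 2) - degExp l (-(1 / 2))) = 0 := by
    rw [map_sub]
    simp [degExp, ← PowerSeries.coeff_zero_eq_constantCoeff_apply, dFall_zero']
  have hcoeffG : ∀ n' : ℕ, PowerSeries.coeff n' ((degExp l (1 / 2) - degExp l (-(1 / 2))) ^ k)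
      = ∑ j ∈ Finset.range (k + 1), (k.choose j : ℝ) * (-1) ^ (k - j) *
          (dFall l ((j : ℝ) - (k : ℝ) / 2) n' / (n' ! : ℝ)) := by
    intro n'
    rw [coeff_sub_pow (degExp l) (degExp_zero l) (degExp_mul l)]
    simp [degExp]
  have hL : (∑ m ∈ Finset.range (n + 1),
        (x ^ n / (k ! : ℝ) * ∑ j ∈ Finset.range (k + 1),
            (k.choose j : ℝ) * (-1) ^ (k - j) * ((j : ℝ) - (k : ℝ) / 2) ^ m) *
          l ^ (n - m) * stirling1 n m)
      = x ^ n / (k ! : ℝ) * ∑ j ∈ Finset.range (k + 1),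
          (k.choose j : ℝ) * (-1) ^ (k - j) * dFall l ((j : ℝ) - (k : ℝ) / 2) n := by
    have h1 : ∀ m ∈ Finset.range (n + 1),
        (x ^ n / (k ! : ℝ) * ∑ j ∈ Finset.range (k + 1),
            (k.choose j : ℝ) * (-1) ^ (k - j) * ((j : ℝ) - (k : ℝ) / 2) ^ m) *
          l ^ (n - m) * stirling1 n m
        = x ^ n / (k ! : ℝ) * ∑ j ∈ Finset.range (k + 1),
            (k.choose j : ℝ) * (-1) ^ (k - j) *
              (((j : ℝ) - (k : ℝ) / 2) ^ m * l ^ (n - m) * stirling1 n m) := by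
      intro m hm
      rw [Finset.mul_sum, Finset.mul_sum, Finset.sum_mul, Finset.sum_mul]
      exact Finset.sum_congr rfl fun j hj => by ring
    rw [Finset.sum_congr rfl h1, ← Finset.mul_sum, Finset.sum_comm]
    congr 1
    refine Finset.sum_congr rfl fun j hj => ?_
    rw [← Finset.mul_sum, star l ((j : ℝ) - (k : ℝ) / 2) n]
  have hR : degCentIncBell l (fun m => x ^ m) n k
      = (n ! : ℝ) * ((k ! : ℝ)⁻¹ * (x ^ n *
          PowerSeries.coeff n ((degExp l (1 / 2) - degExp l (-(1 / 2))) ^ k))) := by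
    rw [degCentIncBell, centralSeq_eq l x, map_smul, smul_eq_mul, ← map_pow, coeff_rescale]
  rcases le_or_gt k n with hkn | hnk
  · rw [if_pos hkn, hL, hR, hcoeffG n, Finset.mul_sum, Finset.mul_sum, Finset.mul_sum,
      Finset.mul_sum]
    refine Finset.sum_congr rfl fun j hj => ?_
    have h3 : (n ! : ℝ) ≠ 0 := Nat.cast_ne_zero.2 (Nat.factorial_ne_zero _)
    field_simp
  · rw [if_neg (not_le.2 hnk), hL]
    have hz : PowerSeries.coeff n ((degExp l (1 / 2) - degExp l (-(1 / 2))) ^ k) = 0 :=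
      coeff_pow_eq_zero hG0 hnk
    have h3 : (n ! : ℝ) ≠ 0 := Nat.cast_ne_zero.2 (Nat.factorial_ne_zero _)
    have hsum : (∑ j ∈ Finset.range (k + 1), (k.choose j : ℝ) * (-1) ^ (k - j) *
        dFall l ((j : ℝ) - (k : ℝ) / 2) n) = 0 := by
      have := hcoeffG n
      rw [hz] at this
      have h4 : (∑ j ∈ Finset.range (k + 1), (k.choose j : ℝ) * (-1) ^ (k - j) *
          (dFall l ((j : ℝ) - (k : ℝ) / 2) n / (n ! : ℝ)))
          = (∑ j ∈ Finset.range (k + 1), (k.choose j : ℝ) * (-1) ^ (k - j) *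
              dFall l ((j : ℝ) - (k : ℝ) / 2) n) / (n ! : ℝ) := by
        rw [Finset.sum_div]
        exact Finset.sum_congr rfl fun j hj => by ring
      rw [h4] at this
      rcases div_eq_zero_iff.1 this.symm with h5 | h5
      · exact h5
      · exact absurd h5 h3
    rw [hsum, mul_zero]
end

section
/- (Theorem 2.4) For every integer n ≥ 1, λ ∈ ℝ, and any real sequence x₁,x₂,…, the degenerate central complete Bell polynomial satisfies B_n^{(c)}(x₁,x₂,…,x_n|λ) = ∑_{m₁+2m₂+⋯+nm_n = n} n!/(m₁! m₂! ⋯ m_n!) · ∏_{j=1}^{n} ( x_j ((1/2)_{j,λ} - (-1)^j⟨1/2⟩_{j,λ}) / j! )^{m_j}, where the sum is over all nonnegative integers m₁,…,m_n with m₁+2m₂+⋯+nm_n = n. -/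
open PowerSeries Finset Nat

private lemma coeff_pow_congr {A B : PowerSeries ℝ} {n : ℕ}
    (h : ∀ i ≤ n, PowerSeries.coeff i A = PowerSeries.coeff i B) (k : ℕ) :
    ∀ i ≤ n, PowerSeries.coeff i (A ^ k) = PowerSeries.coeff i (B ^ k) := by
  induction k with
  | zero => simp
  | succ k ih =>
    intro i hi
    rw [pow_succ, pow_succ, PowerSeries.coeff_mul, PowerSeries.coeff_mul]
    refine Finset.sum_congr rfl fun p hp => ?_
    rw [Finset.HasAntidiagonal.mem_antidiagonal] at hp
    rw [ih p.1 (le_trans (by omega) hi), h p.2 (le_trans (by omega) hi)]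

/-- Theorem 2.4: explicit formula for the degenerate central complete Bell
polynomials. -/
theorem degCentCompBell_explicit (l : ℝ) (x : ℕ → ℝ) (n : ℕ) (hn : 1 ≤ n) :
    degCentCompBell l x n =
      ∑ m ∈ partIdx' n,
        ((n ! : ℝ) / ∏ j, ((m j)! : ℝ)) *
          ∏ j, (x (j.1 + 1) *
              (dFall l (1 / 2) (j.1 + 1) - (-1) ^ (j.1 + 1) * dRise l (1 / 2) (j.1 + 1)) /
                ((j.1 + 1)! : ℝ)) ^ m j := by
  classical
  set a : ℕ → ℝ := fun m => PowerSeries.coeff m (centralSeq l x) with ha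
  set P : PowerSeries ℝ :=
    ∑ j : Fin n, PowerSeries.C (a (j.1 + 1)) * PowerSeries.X ^ (j.1 + 1) with hP
  have hcoeff : ∀ i ≤ n, PowerSeries.coeff i (centralSeq l x) = PowerSeries.coeff i P := by
    intro i hi
    rw [hP, map_sum]
    simp only [PowerSeries.coeff_C_mul, PowerSeries.coeff_X_pow]
    rcases Nat.eq_zero_or_pos i with hi0 | hi0
    · subst hi0
      simp [ha, centralSeq]
    · have e : ∀ j : Fin n, a (j.1 + 1) * (if i = j.1 + 1 then (1 : ℝ) else 0)
          = if (⟨i - 1, by omega⟩ : Fin n) = j then a i else 0 := by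
        intro j
        rcases eq_or_ne ((⟨i - 1, by omega⟩ : Fin n)) j with h | h
        · subst h
          rw [if_pos rfl, if_pos (show i = i - 1 + 1 by omega), mul_one]
          show a (i - 1 + 1) = a i
          congr 1
          omega
        · rw [if_neg h, if_neg, mul_zero]
          intro hcon
          exact h (Fin.ext (show i - 1 = j.1 by omega))
      rw [Finset.sum_congr rfl fun j _ => e j, Finset.sum_ite_eq, if_pos (Finset.mem_univ _)]
  -- coefficient of P^k via the multinomial theorem
  have hPk : ∀ k : ℕ, PowerSeries.coeff n (P ^ k) =
      ∑ m ∈ Finset.piAntidiag Finset.univ k,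
        (Nat.multinomial Finset.univ m : ℝ) *
          (if n = ∑ j : Fin n, (j.1 + 1) * m j then ∏ j : Fin n, a (j.1 + 1) ^ m j else 0) := by
    intro k
    rw [hP, Finset.sum_pow_eq_sum_piAntidiag, map_sum]
    refine Finset.sum_congr rfl fun m _ => ?_
    have hterm : ∀ j : Fin n,
        (PowerSeries.C (a (j.1 + 1)) * PowerSeries.X ^ (j.1 + 1)) ^ m j =
          PowerSeries.C (a (j.1 + 1) ^ m j) * PowerSeries.X ^ ((j.1 + 1) * m j) := by
      intro j
      rw [mul_pow, ← map_pow, ← pow_mul]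
    simp only [hterm]
    rw [Finset.prod_mul_distrib, ← map_prod, Finset.prod_pow_eq_pow_sum]
    rw [← map_natCast (PowerSeries.C (R := ℝ)) (Nat.multinomial Finset.univ m), ← mul_assoc, ← map_mul,
      PowerSeries.coeff_C_mul, PowerSeries.coeff_X_pow]
    split_ifs <;> ring
  have key : degCentCompBell l x n =
      (n ! : ℝ) * ∑ k ∈ Finset.range (n + 1), (k ! : ℝ)⁻¹ *
        PowerSeries.coeff n (P ^ k) := by
    unfold degCentCompBell expComp
    rw [PowerSeries.coeff_mk]
    congr 1
    refine Finset.sum_congr rfl fun k _ => ?_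
    rw [coeff_pow_congr hcoeff k n le_rfl]
  rw [key]
  simp only [hPk]
  have step : ∀ k : ℕ, (k ! : ℝ)⁻¹ *
      ∑ m ∈ Finset.piAntidiag Finset.univ k,
        (Nat.multinomial Finset.univ m : ℝ) *
          (if n = ∑ j : Fin n, (j.1 + 1) * m j then ∏ j : Fin n, a (j.1 + 1) ^ m j else 0) =
      ∑ m ∈ (Finset.piAntidiag (Finset.univ : Finset (Fin n)) k).filter
          (fun m => n = ∑ j : Fin n, (j.1 + 1) * m j),
        (k ! : ℝ)⁻¹ * ((Nat.multinomial Finset.univ m : ℝ) * ∏ j : Fin n, a (j.1 + 1) ^ m j) := by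
    intro k
    rw [Finset.mul_sum, Finset.sum_filter]
    refine Finset.sum_congr rfl fun m _ => ?_
    rw [mul_ite, mul_ite, mul_zero, mul_zero]
  simp only [step]
  rw [Finset.mul_sum]
  simp only [Finset.mul_sum]
  rw [Finset.sum_sigma']
  have haj : ∀ j : ℕ, a (j + 1) =
      x (j + 1) * (dFall l (1 / 2) (j + 1) - (-1) ^ (j + 1) * dRise l (1 / 2) (j + 1)) /
        ((j + 1)! : ℝ) := by
    intro j
    simp [ha, centralSeq, PowerSeries.coeff_mk]
  refine Finset.sum_nbij' (fun p => p.2) (fun m => ⟨∑ j, m j, m⟩) ?_ ?_ ?_ ?_ ?_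
  · rintro ⟨k, m⟩ hp
    simp only [Finset.mem_sigma, Finset.mem_filter, Finset.mem_piAntidiag,
      Finset.mem_range] at hp
    obtain ⟨hk, ⟨hsum, -⟩, hn'⟩ := hp
    dsimp only
    rw [partIdx', Finset.mem_filter]
    constructor
    · rw [Fintype.mem_piFinset]
      intro j
      rw [Finset.mem_range]
      have h1 : (j.1 + 1) * m j ≤ ∑ j : Fin n, (j.1 + 1) * m j :=
        Finset.single_le_sum (f := fun j : Fin n => (j.1 + 1) * m j)
          (fun _ _ => Nat.zero_le _) (Finset.mem_univ j)
      have h2 : m j ≤ (j.1 + 1) * m j := Nat.le_mul_of_pos_left _ (Nat.succ_pos _)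
      omega
    · exact hn'.symm
  · intro m hm
    rw [partIdx', Finset.mem_filter] at hm
    obtain ⟨-, hm2⟩ := hm
    have hle : ∑ j, m j ≤ ∑ j : Fin n, (j.1 + 1) * m j :=
      Finset.sum_le_sum fun j _ => Nat.le_mul_of_pos_left _ (Nat.succ_pos _)
    rw [Finset.mem_sigma]
    constructor
    · dsimp only
      exact Finset.mem_range.2 (by omega)
    · dsimp only
      rw [Finset.mem_filter, Finset.mem_piAntidiag]
      exact ⟨⟨rfl, fun i _ => Finset.mem_univ i⟩, hm2.symm⟩
  · rintro ⟨k, m⟩ hp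
    simp only [Finset.mem_sigma, Finset.mem_filter, Finset.mem_piAntidiag,
      Finset.mem_range] at hp
    obtain ⟨-, ⟨hsum, -⟩, -⟩ := hp
    exact Sigma.ext hsum HEq.rfl
  · intro m _
    rfl
  · rintro ⟨k, m⟩ hp
    simp only [Finset.mem_sigma, Finset.mem_filter, Finset.mem_piAntidiag,
      Finset.mem_range] at hp
    obtain ⟨-, ⟨hsum, -⟩, -⟩ := hp
    dsimp only
    have hspec := Nat.multinomial_spec (Finset.univ : Finset (Fin n)) m
    have hspecR : (∏ j : Fin n, ((m j)! : ℝ)) * (Nat.multinomial Finset.univ m : ℝ)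
        = ((∑ j : Fin n, m j)! : ℝ) := by
      rw [← Nat.cast_prod, ← Nat.cast_mul, hspec]
    have hprodpos : (∏ j : Fin n, ((m j)! : ℝ)) ≠ 0 := by positivity
    have hfacpos : (((∑ j : Fin n, m j)!) : ℝ) ≠ 0 := by positivity
    have hmult : (Nat.multinomial Finset.univ m : ℝ)
        = ((∑ j : Fin n, m j)! : ℝ) / ∏ j : Fin n, ((m j)! : ℝ) := by
      rw [eq_div_iff hprodpos]
      linarith [hspecR]
    have hk : k = ∑ j : Fin n, m j := hsum.symm
    subst hk
    rw [hmult]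
    have hprod : ∏ j : Fin n, a (j.1 + 1) ^ m j =
        ∏ j : Fin n, (x (j.1 + 1) *
          (dFall l (1 / 2) (j.1 + 1) - (-1) ^ (j.1 + 1) * dRise l (1 / 2) (j.1 + 1)) /
            ((j.1 + 1)! : ℝ)) ^ m j := by
      refine Finset.prod_congr rfl fun j _ => ?_
      rw [haj j.1]
    rw [hprod]
    field_simp
end
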